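/- Let C^l be the class of functions on an infinite instance space X that equal +1 everywhere except on at most l points (where they equal -1). Then for any t >= 0, the tree shattering coefficient S(C^l, t) equals sum_{i=0}^{l} binom(t, i). -/

import Mathlib

/-- A depth-`t` `X`-valued tree: a family of maps `x_s : {-1,+1}^(s-1) → X`. -/
def XTree (X : Type*) (t : ℕ) := (s : Fin t) → (Fin s.val → ℤ) → X

/-- A sign path: a sequence with entries in `{-1,+1}`. -/
def IsSignPath {t : ℕ} (ε : Fin t → ℤ) : Prop := ∀ s, ε s = 1 ∨ ε s = -1

/-- `S(H, x)`: the set of sign paths realized by some hypothesis `h ∈ H` along the tree `x`,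
i.e. `ε_s = h (x_s (ε_1, …, ε_{s-1}))` for all `s`. -/
def realizedPaths {X : Type*} (H : Set (X → ℤ)) {t : ℕ} (x : XTree X t) :
    Set (Fin t → ℤ) :=
  {ε | IsSignPath ε ∧ ∃ h ∈ H, ∀ s : Fin t,
    ε s = h (x s (fun i => ε ⟨i.val, i.isLt.trans s.isLt⟩))}

/-- The tree shattering coefficient `S(H, t)`: the maximum of `|S(H, x)|` over
all depth-`t` `X`-valued trees `x`. -/
noncomputable def treeShatter {X : Type*} (H : Set (X → ℤ)) (t : ℕ) : ℕ :=
  ⨆ x : XTree X t, (realizedPaths H x).ncard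

open Classical in
/-- `C^l`: the class of functions equal to `+1` everywhere except on at most `l` points,
where they equal `-1` (unions of at most `l` singletons). -/
def unionSingletons (X : Type*) (l : ℕ) : Set (X → ℤ) :=
  {h | ∃ A : Set X, A.Finite ∧ A.ncard ≤ l ∧ ∀ a, h a = if a ∈ A then -1 else 1}

open Classical in
/-- Auxiliary class: indicators of finite sets `A ⊇ B` with `|A| ≤ |B| + m`. -/
def auxK (X : Type*) (B : Set X) (m : ℕ) : Set (X → ℤ) :=
  {h | ∃ A : Set X, A.Finite ∧ B ⊆ A ∧ A.ncard ≤ B.ncard + m ∧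
    ∀ a, h a = if a ∈ A then -1 else 1}

lemma unionSingletons_eq_auxK (X : Type*) (l : ℕ) :
    unionSingletons X l = auxK X ∅ l := by
  ext h
  simp only [unionSingletons, auxK, Set.mem_setOf_eq, Set.empty_subset, true_and,
    Set.ncard_empty, zero_add]

/-- `Φ_m(t)`. -/
def auxPhi (m t : ℕ) : ℕ := ∑ i ∈ Finset.range (m + 1), t.choose i

lemma auxPhi_zero_right (m : ℕ) : auxPhi m 0 = 1 := by
  induction m with
  | zero => simp [auxPhi]
  | succ m ih =>
    rw [auxPhi, Finset.sum_range_succ, Nat.choose_zero_succ]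
    simpa [auxPhi] using ih

lemma auxPhi_mono (m t : ℕ) : auxPhi m t ≤ auxPhi m (t + 1) :=
  Finset.sum_le_sum fun i _ => Nat.choose_le_choose i (Nat.le_succ t)

lemma auxPhi_succ (m t : ℕ) :
    auxPhi (m + 1) (t + 1) = auxPhi (m + 1) t + auxPhi m t := by
  unfold auxPhi
  rw [Finset.sum_range_succ' (fun i => (t + 1).choose i) (m + 1),
    Finset.sum_range_succ' (fun i => t.choose i) (m + 1)]
  simp only [Nat.choose_succ_succ, Nat.choose_zero_right, Finset.sum_add_distrib]
  ring

lemma signPaths_finite (t : ℕ) : {ε : Fin t → ℤ | IsSignPath ε}.Finite := by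
  have h : {ε : Fin t → ℤ | IsSignPath ε} ⊆
      Set.pi Set.univ (fun _ : Fin t => ({1, -1} : Set ℤ)) := by
    intro ε hε s _
    exact hε s
  exact (Set.Finite.pi fun _ => (Set.finite_singleton (-1 : ℤ)).insert 1).subset h

lemma realizedPaths_finite {X : Type*} (H : Set (X → ℤ)) {t : ℕ} (x : XTree X t) :
    (realizedPaths H x).Finite :=
  (signPaths_finite t).subset fun _ hε => hε.1

lemma realizedPaths_mono {X : Type*} {H H' : Set (X → ℤ)} (hH : H ⊆ H') {t : ℕ}
    (x : XTree X t) : realizedPaths H x ⊆ realizedPaths H' x := by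
  rintro ε ⟨h1, h, hh, h3⟩
  exact ⟨h1, h, hH hh, h3⟩

lemma realizedPaths_empty {X : Type*} {t : ℕ} (x : XTree X t) :
    realizedPaths (∅ : Set (X → ℤ)) x = ∅ := by
  ext ε
  simp [realizedPaths]

set_option maxHeartbeats 1000000 in
lemma auxK_upper {X : Type*} :
    ∀ (t : ℕ) (B : Set X), B.Finite → ∀ (m : ℕ) (x : XTree X t),
      (realizedPaths (auxK X B m) x).ncard ≤ auxPhi m t := by
  intro t
  induction t with
  | zero =>
    intro B _ m x
    have hsub : realizedPaths (auxK X B m) x ⊆ {fun i : Fin 0 => i.elim0} := by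
      intro ε _
      exact funext fun i => i.elim0
    calc (realizedPaths (auxK X B m) x).ncard ≤ ({fun i : Fin 0 => i.elim0} :
          Set (Fin 0 → ℤ)).ncard := Set.ncard_le_ncard hsub (Set.finite_singleton _)
      _ = 1 := Set.ncard_singleton _
      _ = auxPhi m 0 := (auxPhi_zero_right m).symm
  | succ t ih =>
    intro B hB m x
    set p : X := x ⟨0, t.succ_pos⟩ (fun i => i.elim0) with hp
    set y : ℤ → XTree X t := fun σ s ρ => x s.succ (Fin.cases σ ρ) with hy
    set cns : ℤ → (Fin t → ℤ) → (Fin (t + 1) → ℤ) := fun σ => Fin.cons (α := fun _ : Fin (t + 1) => ℤ) σ with hcns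
    -- the key step lemma
    have step : ∀ (σ : ℤ) (ε : Fin (t + 1) → ℤ), ε ∈ realizedPaths (auxK X B m) x →
        ε ⟨0, t.succ_pos⟩ = σ →
        Fin.tail ε ∈ realizedPaths (auxK X B m ∩ {h | h p = σ}) (y σ) := by
      rintro σ ε ⟨hsign, h, hh, hreal⟩ hε0
      have hhp : h p = σ := by
        have h2 : p = x ⟨0, t.succ_pos⟩
            (fun i => ε ⟨i.val, i.isLt.trans (⟨0, t.succ_pos⟩ : Fin (t + 1)).isLt⟩) := by
          rw [hp]
          exact congrArg _ (funext fun i => i.elim0)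
        rw [h2, ← hreal ⟨0, t.succ_pos⟩, hε0]
      refine ⟨fun s => hsign s.succ, h, ⟨hh, hhp⟩, fun s => ?_⟩
      have key : (fun i : Fin (s.succ : Fin (t + 1)).val =>
            ε ⟨i.val, i.isLt.trans (s.succ : Fin (t + 1)).isLt⟩)
          = Fin.cases (motive := fun _ => ℤ) σ
            (fun i : Fin s.val => Fin.tail ε ⟨i.val, i.isLt.trans s.isLt⟩) := by
        funext i
        induction i using Fin.cases with
        | zero =>
          rw [Fin.cases_zero]
          refine (congrArg ε ?_).trans hε0
          exact Fin.ext (by simp)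
        | succ j =>
          rw [Fin.cases_succ]
          show ε _ = Fin.tail ε _
          simp only [Fin.tail]
          refine congrArg ε ?_
          exact Fin.ext (by simp)
      show Fin.tail ε s = h (y σ s fun i => Fin.tail ε ⟨i.val, i.isLt.trans s.isLt⟩)
      calc Fin.tail ε s = ε s.succ := rfl
        _ = h (x s.succ (fun i => ε ⟨i.val, i.isLt.trans (s.succ : Fin (t + 1)).isLt⟩)) :=
            hreal s.succ
        _ = h (x s.succ (Fin.cases (motive := fun _ => ℤ) σ
            (fun i : Fin s.val => Fin.tail ε ⟨i.val, i.isLt.trans s.isLt⟩))) := by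
            rw [key]
        _ = h (y σ s fun i => Fin.tail ε ⟨i.val, i.isLt.trans s.isLt⟩) := rfl
    have hsub : realizedPaths (auxK X B m) x ⊆
        (cns 1 '' realizedPaths (auxK X B m ∩ {h | h p = 1}) (y 1)) ∪
        (cns (-1) '' realizedPaths (auxK X B m ∩ {h | h p = -1}) (y (-1))) := by
      intro ε hε
      rcases hε.1 ⟨0, t.succ_pos⟩ with h0 | h0
      · left
        refine ⟨Fin.tail ε, step 1 ε hε h0, ?_⟩
        show Fin.cons (1 : ℤ) (Fin.tail ε) = ε
        rw [← h0]
        exact Fin.cons_self_tail ε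
      · right
        refine ⟨Fin.tail ε, step (-1) ε hε h0, ?_⟩
        show Fin.cons (-1 : ℤ) (Fin.tail ε) = ε
        rw [← h0]
        exact Fin.cons_self_tail ε
    have hfin1 := realizedPaths_finite (auxK X B m ∩ {h | h p = 1}) (y 1)
    have hfin2 := realizedPaths_finite (auxK X B m ∩ {h | h p = -1}) (y (-1))
    have hinj : ∀ σ : ℤ, Function.Injective (cns σ) := by
      intro σ
      rw [hcns]
      exact Fin.cons_right_injective (α := fun _ : Fin (t + 1) => ℤ) σ
    have hcard : (realizedPaths (auxK X B m) x).ncard ≤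
        (realizedPaths (auxK X B m ∩ {h | h p = 1}) (y 1)).ncard +
        (realizedPaths (auxK X B m ∩ {h | h p = -1}) (y (-1))).ncard := by
      have e1 : (cns 1 '' realizedPaths (auxK X B m ∩ {h | h p = 1}) (y 1)).ncard
          = (realizedPaths (auxK X B m ∩ {h | h p = 1}) (y 1)).ncard :=
        Set.ncard_image_of_injective _ (hinj 1)
      have e2 : (cns (-1) '' realizedPaths (auxK X B m ∩ {h | h p = -1})
            (y (-1))).ncard
          = (realizedPaths (auxK X B m ∩ {h | h p = -1}) (y (-1))).ncard :=
        Set.ncard_image_of_injective _ (hinj (-1))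
      have h1 := Set.ncard_le_ncard hsub ((hfin1.image _).union (hfin2.image _))
      have h2 := Set.ncard_union_le
        (cns 1 '' realizedPaths (auxK X B m ∩ {h | h p = 1}) (y 1))
        (cns (-1) '' realizedPaths (auxK X B m ∩ {h | h p = -1}) (y (-1)))
      rw [e1, e2] at h2
      exact h1.trans h2
    have hbound1 : (realizedPaths (auxK X B m ∩ {h | h p = 1}) (y 1)).ncard ≤
        auxPhi m t := by
      refine le_trans (Set.ncard_le_ncard (realizedPaths_mono Set.inter_subset_left _)
        (realizedPaths_finite _ _)) (ih B hB m (y 1))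
    by_cases hpB : p ∈ B
    · -- left class is empty
      have hempty : auxK X B m ∩ {h | h p = 1} = ∅ := by
        ext h
        simp only [Set.mem_inter_iff, Set.mem_setOf_eq, Set.mem_empty_iff_false,
          iff_false, not_and]
        rintro ⟨A, _, hBA, _, hA⟩ h1
        rw [hA p, if_pos (hBA hpB)] at h1
        norm_num at h1
      rw [hempty, realizedPaths_empty, Set.ncard_empty, zero_add] at hcard
      have hbound2 : (realizedPaths (auxK X B m ∩ {h | h p = -1}) (y (-1))).ncard ≤
          auxPhi m t :=
        le_trans (Set.ncard_le_ncard (realizedPaths_mono Set.inter_subset_left _)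
          (realizedPaths_finite _ _)) (ih B hB m (y (-1)))
      exact le_trans (le_trans hcard hbound2) (auxPhi_mono m t)
    · match m with
      | 0 =>
        have hempty : auxK X B 0 ∩ {h | h p = -1} = ∅ := by
          ext h
          simp only [Set.mem_inter_iff, Set.mem_setOf_eq, Set.mem_empty_iff_false,
            iff_false, not_and]
          rintro ⟨A, hAfin, hBA, hAcard, hA⟩ h1
          rw [add_zero] at hAcard
          have hBAeq : B = A := Set.eq_of_subset_of_ncard_le hBA hAcard hAfin
          rw [hA p, if_neg (by rw [← hBAeq]; exact hpB)] at h1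
          norm_num at h1
        rw [hempty, realizedPaths_empty, Set.ncard_empty, add_zero] at hcard
        calc (realizedPaths (auxK X B 0) x).ncard ≤ auxPhi 0 t :=
              le_trans hcard hbound1
          _ ≤ auxPhi 0 (t + 1) := auxPhi_mono 0 t
      | m' + 1 =>
        have hKeq : auxK X B (m' + 1) ∩ {h | h p = -1} = auxK X (insert p B) m' := by
          have hinsert : (insert p B).ncard = B.ncard + 1 :=
            Set.ncard_insert_of_notMem hpB hB
          ext h
          simp only [Set.mem_inter_iff, Set.mem_setOf_eq, auxK]
          constructor
          · rintro ⟨⟨A, hAfin, hBA, hAcard, hA⟩, h1⟩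
            have hpA : p ∈ A := by
              by_contra hpA
              rw [hA p, if_neg hpA] at h1
              norm_num at h1
            refine ⟨A, hAfin, Set.insert_subset hpA hBA, ?_, hA⟩
            rw [hinsert, show B.ncard + 1 + m' = B.ncard + (m' + 1) from by ring]
            exact hAcard
          · rintro ⟨A, hAfin, hBA, hAcard, hA⟩
            rw [hinsert, show B.ncard + 1 + m' = B.ncard + (m' + 1) from by ring]
              at hAcard
            refine ⟨⟨A, hAfin, (Set.subset_insert p B).trans hBA, hAcard, hA⟩, ?_⟩
            rw [hA p, if_pos (hBA (Set.mem_insert p B))]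
        rw [hKeq] at hcard
        have hbound2 : (realizedPaths (auxK X (insert p B) m') (y (-1))).ncard ≤
            auxPhi m' t := ih (insert p B) (hB.insert p) m' (y (-1))
        rw [auxPhi_succ m' t]
        exact hcard.trans (Nat.add_le_add hbound1 hbound2)

open Classical in
lemma lower_count {X : Type*} [Infinite X] (l t : ℕ) :
    auxPhi l t ≤ treeShatter (unionSingletons X l) t := by
  classical
  -- an injection Fin t ↪ X
  let e : Fin t ↪ X := Fin.valEmbedding.trans (Infinite.natEmbedding X)
  let spine : XTree X t := fun s _ => e s
  let F : Finset (Finset (Fin t)) :=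
    (Finset.range (l + 1)).biUnion fun i => Finset.powersetCard i Finset.univ
  have hFmem : ∀ S : Finset (Fin t), S ∈ F ↔ S.card ≤ l := by
    intro S
    simp only [F, Finset.mem_biUnion, Finset.mem_range, Finset.mem_powersetCard]
    constructor
    · rintro ⟨i, hi, _, hcard⟩; omega
    · intro h; exact ⟨S.card, by omega, S.subset_univ, rfl⟩
  have hFcard : F.card = auxPhi l t := by
    rw [Finset.card_biUnion]
    · refine Finset.sum_congr rfl fun i _ => ?_
      rw [Finset.card_powersetCard, Finset.card_univ, Fintype.card_fin]
    · intro i _ j _ hij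
      simp only [Finset.disjoint_left, Finset.mem_powersetCard]
      rintro S ⟨_, hSi⟩ ⟨_, hSj⟩
      exact hij (hSi ▸ hSj ▸ rfl)
  let indic : Finset (Fin t) → (Fin t → ℤ) := fun S s => if s ∈ S then -1 else 1
  have hindic_inj : Function.Injective indic := by
    intro S S' hSS
    ext s
    have := congrFun hSS s
    simp only [indic] at this
    by_cases hs : s ∈ S <;> by_cases hs' : s ∈ S' <;>
      simp_all [hs, hs']
  have hset : realizedPaths (unionSingletons X l) spine = ↑(F.image indic) := by
    ext ε
    simp only [Finset.coe_image, Set.mem_image, Finset.mem_coe]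
    constructor
    · rintro ⟨hsign, h, ⟨A, hAfin, hAcard, hA⟩, hreal⟩
      refine ⟨Finset.univ.filter (fun s => e s ∈ A), ?_, ?_⟩
      · rw [hFmem]
        have hcard : (Finset.univ.filter (fun s => e s ∈ A)).card ≤
            hAfin.toFinset.card := by
          refine Finset.card_le_card_of_injOn (fun s => e s) ?_ ?_
          · intro s hs
            rw [Finset.mem_coe, Finset.mem_filter] at hs
            simpa using hs.2
          · exact fun a _ b _ hab => e.injective hab
        rw [← Set.ncard_eq_toFinset_card _ hAfin] at hcard
        omega
      · funext s
        have := hreal s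
        simp only [spine] at this
        rw [hA (e s)] at this
        simp only [indic, Finset.mem_filter, Finset.mem_univ, true_and]
        rw [this]
    · rintro ⟨S, hSF, rfl⟩
      refine ⟨fun s => ?_, fun a => if a ∈ (↑(S.image e) : Set X) then -1 else 1,
        ⟨↑(S.image e), (S.image e).finite_toSet, ?_,
          fun a => by by_cases ha : a ∈ (↑(S.image e) : Set X) <;> simp [ha]⟩,
        fun s => ?_⟩
      · simp only [indic]
        by_cases hs : s ∈ S <;> simp [hs]
      · rw [Set.ncard_coe_finset]
        refine le_trans (Finset.card_image_le) ?_
        rw [← hFmem]; exact hSF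
      · show (if s ∈ S then (-1 : ℤ) else 1) = _
        by_cases hs : s ∈ S
        · have hmem : e s ∈ (↑(S.image e) : Set X) := by
            simp only [Finset.coe_image, Set.mem_image, Finset.mem_coe]
            exact ⟨s, hs, rfl⟩
          simp [hs, hmem, spine]
        · have hmem : e s ∉ (↑(S.image e) : Set X) := by
            simp only [Finset.coe_image, Set.mem_image, Finset.mem_coe]
            rintro ⟨s', hs', heq⟩
            exact hs (e.injective heq ▸ hs')
          simp [hs, hmem, spine]
  have hncard : (realizedPaths (unionSingletons X l) spine).ncard = auxPhi l t := by
    rw [hset, Set.ncard_coe_finset, Finset.card_image_of_injective _ hindic_inj, hFcard]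
  have hbdd : BddAbove (Set.range fun x : XTree X t =>
      (realizedPaths (unionSingletons X l) x).ncard) := by
    refine ⟨auxPhi l t, ?_⟩
    rintro _ ⟨x, rfl⟩
    rw [unionSingletons_eq_auxK]
    exact auxK_upper t ∅ Set.finite_empty l x
  calc auxPhi l t = (realizedPaths (unionSingletons X l) spine).ncard := hncard.symm
    _ ≤ treeShatter (unionSingletons X l) t := le_ciSup hbdd spine

theorem stmt11 {X : Type*} [Infinite X] (l t : ℕ) :
    treeShatter (unionSingletons X l) t = ∑ i ∈ Finset.range (l + 1), t.choose i := by
  have hne : Nonempty (XTree X t) := ⟨fun s _ => Classical.arbitrary X⟩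
  refine le_antisymm ?_ (lower_count l t)
  refine ciSup_le fun x => ?_
  rw [unionSingletons_eq_auxK]
  exact auxK_upper t ∅ Set.finite_empty l x
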